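/- Let G be a group and G⁰ the group with a zero adjoined. Then G⁰ is left fairly amenable if and only if G is an amenable group. -/

import Mathlib

open Set

/-- A finitely-additive probability measure on a type `S`. -/
def IsFAProb {S : Type*} (μ : Set S → ℝ) : Prop :=
  μ Set.univ = 1 ∧ (∀ A, 0 ≤ μ A) ∧
    ∀ A B : Set S, Disjoint A B → μ (A ∪ B) = μ A + μ B

/-- `μ` is left fairly invariant: `μ (s A) = μ A` whenever left
multiplication by `s` is injective on `A`. -/
def LeftFairlyInv {S : Type*} [Mul S] (μ : Set S → ℝ) : Prop :=
  ∀ (s : S) (A : Set S), Set.InjOn (fun x => s * x) A →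
    μ ((fun x => s * x) '' A) = μ A

/-- `μ` is right fairly invariant. -/
def RightFairlyInv {S : Type*} [Mul S] (μ : Set S → ℝ) : Prop :=
  ∀ (s : S) (A : Set S), Set.InjOn (fun x => x * s) A →
    μ ((fun x => x * s) '' A) = μ A

lemma fa_empty {S : Type*} {μ : Set S → ℝ} (h : IsFAProb μ) : μ ∅ = 0 := by
  have := h.2.2 ∅ ∅ (by simp)
  simp at this; linarith

lemma fa_mono {S : Type*} {μ : Set S → ℝ} (h : IsFAProb μ) {A B : Set S}
    (hAB : A ⊆ B) : μ A ≤ μ B := by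
  have hB : B = A ∪ (B \ A) := (Set.union_diff_cancel hAB).symm
  have := h.2.2 A (B \ A) disjoint_sdiff_right
  have hp := h.2.1 (B \ A)
  rw [hB, this]; linarith

/-- In an infinite group, any invariant finitely additive probability measure
vanishes on singletons. -/
lemma sing_zero {G : Type*} [Group G] [Infinite G] {ν : Set G → ℝ}
    (hν : IsFAProb ν)
    (hinv : ∀ (g : G) (A : Set G), ν ((fun x => g * x) '' A) = ν A) (b : G) :
    ν {b} = 0 := by
  obtain ⟨hu, hp, ha⟩ := hν
  set c : ℝ := ν {(1 : G)} with hc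
  have hsing : ∀ g : G, ν {g} = c := by
    intro g
    have := hinv g {(1 : G)}
    simpa using this
  classical
  have hfin : ∀ F : Finset G, ν ↑F = F.card * c := by
    intro F
    induction F using Finset.induction_on with
    | empty => simpa using fa_empty ⟨hu, hp, ha⟩
    | insert a F hnm ih =>
      have hd : Disjoint ({a} : Set G) ↑F := by simpa using hnm
      rw [Finset.coe_insert, Set.insert_eq, ha _ _ hd, ih, hsing]
      simp [Finset.card_insert_of_notMem hnm]
      ring
  have hle : ∀ n : ℕ, (n : ℝ) * c ≤ 1 := by
    intro n
    obtain ⟨F, hF⟩ := Infinite.exists_subset_card_eq G n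
    have := fa_mono ⟨hu, hp, ha⟩ (Set.subset_univ (↑F : Set G))
    rw [hfin, hF, hu] at this
    exact this
  have hc0 : c ≤ 0 := by
    by_contra hpos
    push_neg at hpos
    obtain ⟨n, hn⟩ := exists_nat_gt (1 / c)
    have : (1 : ℝ) < n * c := by
      rw [div_lt_iff₀ hpos] at hn; linarith
    linarith [hle n]
  have := hp {(1 : G)}
  rw [hsing b]
  linarith

lemma bwd (G : Type*) [Group G]
    (hex : ∃ μ : Set G → ℝ, IsFAProb μ ∧
      ∀ (g : G) (A : Set G), μ ((fun x => g * x) '' A) = μ A) :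
    ∃ μ : Set (WithZero G) → ℝ, IsFAProb μ ∧ LeftFairlyInv μ := by
  obtain ⟨ν, hν, hinv⟩ := hex
  cases finite_or_infinite G with
  | inl hfin =>
    -- uniform measure on the finite type `WithZero G`
    haveI := Fintype.ofFinite G
    haveI : Fintype (WithZero G) := inferInstanceAs (Fintype (Option G))
    haveI : Finite (WithZero G) := Finite.of_fintype _
    refine ⟨fun B => (B.ncard : ℝ) / (Nat.card (WithZero G)), ⟨?_, ?_, ?_⟩, ?_⟩
    · simp only [Set.ncard_univ]
      rw [div_self]
      exact_mod_cast Nat.card_pos.ne'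
    · intro A; positivity
    · intro A B hAB
      simp only []
      rw [Set.ncard_union_eq hAB A.toFinite B.toFinite]
      push_cast; ring
    · intro s A hs
      simp only []
      rw [Set.ncard_image_of_injOn hs]
  | inr hinf =>
    obtain ⟨hu, hp, ha⟩ := hν
    refine ⟨fun B => ν ((fun x : G => (x : WithZero G)) ⁻¹' B), ⟨?_, ?_, ?_⟩, ?_⟩
    · simpa using hu
    · intro A; exact hp _
    · intro A B hAB
      simp only []
      rw [Set.preimage_union]
      exact ha _ _ (hAB.preimage _)
    · intro s A hs
      simp only []
      induction s using WithZero.recZeroCoe with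
      | zero =>
        -- A is a subsingleton
        have hsub : A.Subsingleton := by
          intro x hx y hy
          exact hs hx hy (by simp)
        have himg : (fun x : G => (x : WithZero G)) ⁻¹' ((fun x => 0 * x) '' A) = ∅ := by
          ext x
          simp only [Set.mem_preimage, Set.mem_image, zero_mul, Set.mem_empty_iff_false,
            iff_false]
          rintro ⟨a, -, h⟩
          exact WithZero.coe_ne_zero h.symm
        rw [himg, fa_empty ⟨hu, hp, ha⟩]
        have hsub' : ((fun x : G => (x : WithZero G)) ⁻¹' A).Subsingleton := by
          intro x hx y hy
          exact WithZero.coe_inj.mp (hsub hx hy)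
        rcases hsub'.eq_empty_or_singleton with h | ⟨b, h⟩
        · rw [h, fa_empty ⟨hu, hp, ha⟩]
        · rw [h, sing_zero ⟨hu, hp, ha⟩ hinv b]
      | coe g =>
        have hpre : (fun x : G => (x : WithZero G)) ⁻¹' ((fun x => (g : WithZero G) * x) '' A)
            = (fun x => g * x) '' ((fun x : G => (x : WithZero G)) ⁻¹' A) := by
          ext x
          simp only [Set.mem_preimage, Set.mem_image]
          constructor
          · rintro ⟨a, haA, heq⟩
            refine ⟨g⁻¹ * x, ?_, by group⟩
            have : a = ((g⁻¹ * x : G) : WithZero G) := by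
              rw [WithZero.coe_mul]
              rw [← heq]
              simp [← mul_assoc, ← WithZero.coe_mul]
            rwa [← this]
          · rintro ⟨y, hyA, rfl⟩
            exact ⟨(y : WithZero G), hyA, by rw [WithZero.coe_mul]⟩
        rw [hpre, hinv g]

lemma fwd (G : Type*) [Group G]
    (hex : ∃ μ : Set (WithZero G) → ℝ, IsFAProb μ ∧ LeftFairlyInv μ) :
    ∃ μ : Set G → ℝ, IsFAProb μ ∧
      ∀ (g : G) (A : Set G), μ ((fun x => g * x) '' A) = μ A := by
  obtain ⟨μ, hμ, hinv⟩ := hex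
  obtain ⟨hu, hp, ha⟩ := hμ
  set c : ℝ := μ {(0 : WithZero G)} with hc
  -- μ {↑1} = c
  have h1 : μ {((1:G) : WithZero G)} = c := by
    have := hinv 0 {((1:G) : WithZero G)} (fun x hx y hy _ => by
      simp only [Set.mem_singleton_iff] at hx hy; rw [hx, hy])
    simp only [Set.image_singleton, zero_mul] at this
    exact this.symm
  have hd01 : Disjoint ({(0 : WithZero G)} : Set (WithZero G)) {((1:G) : WithZero G)} := by
    simp [Set.disjoint_singleton]
  have h2c : 2 * c ≤ 1 := by
    have := ha _ _ hd01
    have hm := fa_mono ⟨hu, hp, ha⟩ (Set.subset_univ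
      ({(0 : WithZero G)} ∪ {((1:G) : WithZero G)}))
    rw [this, h1] at hm
    linarith [hu ▸ hm]
  have hcpos : (0:ℝ) < 1 - c := by
    have := hp {(0 : WithZero G)}
    linarith
  -- the coe image of univ is {0}ᶜ
  have hrange : (fun x : G => (x : WithZero G)) '' Set.univ = {(0 : WithZero G)}ᶜ := by
    ext x
    simp only [Set.image_univ, Set.mem_range, Set.mem_compl_iff, Set.mem_singleton_iff]
    constructor
    · rintro ⟨b, rfl⟩; exact WithZero.coe_ne_zero
    · intro hx; obtain ⟨b, rfl⟩ := WithZero.ne_zero_iff_exists.mp hx; exact ⟨b, rfl⟩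
  have hcompl : μ ({(0 : WithZero G)}ᶜ) = 1 - c := by
    have := ha {(0 : WithZero G)} ({(0 : WithZero G)}ᶜ) disjoint_compl_right
    rw [Set.union_compl_self, hu] at this
    linarith
  refine ⟨fun A => μ ((fun x : G => (x : WithZero G)) '' A) / (1 - c), ⟨?_, ?_, ?_⟩, ?_⟩
  · simp only []; rw [hrange, hcompl]; field_simp
  · intro A; exact div_nonneg (hp _) hcpos.le
  · intro A B hAB
    simp only []
    rw [Set.image_union, ha _ _ ((Set.disjoint_image_iff
      (fun a b h => WithZero.coe_inj.mp h)).mpr hAB)]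
    ring
  · intro g A
    simp only []
    have him : (fun x : G => (x : WithZero G)) '' ((fun x => g * x) '' A)
        = (fun x => ((g : WithZero G)) * x) '' ((fun x : G => (x : WithZero G)) '' A) := by
      rw [Set.image_image, Set.image_image]
      simp [WithZero.coe_mul]
    rw [him, hinv (g : WithZero G) _ ((mul_right_injective₀
      (WithZero.coe_ne_zero (a := g))).injOn)]

/-- `G⁰` is left fairly amenable iff the group `G` is amenable. -/
theorem stmt13 (G : Type*) [Group G] :
    (∃ μ : Set (WithZero G) → ℝ, IsFAProb μ ∧ LeftFairlyInv μ) ↔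
    (∃ μ : Set G → ℝ, IsFAProb μ ∧
      ∀ (g : G) (A : Set G), μ ((fun x => g * x) '' A) = μ A) := by
  exact ⟨fwd G, bwd G⟩
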